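/- (Concatenation property of absolute energy minimizers.) In the abstract trajectory setting with energy readout e, let y ∈ Y, T ≥ 0, let u ∈ 𝒰(y) be an absolute energy minimizer in 𝒰(y), and let v ∈ 𝒰(u(T)) be an absolute energy minimizer in 𝒰(u(T)). Then the concatenation u ∪_T v is an absolute energy minimizer in 𝒰(y). -/

import Mathlib

open MeasureTheory

/-- Integrability of `exp(-λt) * f t` on `[a, ∞)` for `f` antitone nonnegative. -/
lemma integrable_exp_mul_antitone {f : ℝ → ℝ} {a lam : ℝ}
    (hf : AntitoneOn f (Set.Ici a)) (hnn : ∀ t, a ≤ t → 0 ≤ f t) (hlam : 0 < lam) :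
    IntegrableOn (fun t => Real.exp (-lam * t) * f t) (Set.Ici a) := by
  have hmeas : AEMeasurable f (volume.restrict (Set.Ici a)) :=
    aemeasurable_restrict_of_antitoneOn measurableSet_Ici hf
  have hdom : IntegrableOn (fun t => f a * Real.exp (-lam * t)) (Set.Ici a) := by
    rw [integrableOn_Ici_iff_integrableOn_Ioi]
    exact (exp_neg_integrableOn_Ioi a hlam).const_mul _
  refine Integrable.mono' hdom
    ((Real.measurable_exp.comp (measurable_const.mul measurable_id)).aemeasurable.mul
      hmeas).aestronglyMeasurable ?_
  filter_upwards [ae_restrict_mem measurableSet_Ici] with t ht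
  have h1 : 0 ≤ f t := hnn t ht
  have h2 : f t ≤ f a := hf (Set.mem_Ici.2 le_rfl) ht ht
  rw [Real.norm_eq_abs, abs_of_nonneg (by positivity)]
  calc Real.exp (-lam * t) * f t ≤ Real.exp (-lam * t) * f a := by
        exact mul_le_mul_of_nonneg_left h2 (Real.exp_pos _).le
    _ = f a * Real.exp (-lam * t) := mul_comm _ _

/-- Shift formula for the exponentially weighted integral. -/
lemma shift_integral (g : ℝ → ℝ) (T lam : ℝ) :
    (∫ t in Set.Ioi T, Real.exp (-lam * t) * g (t - T))
      = Real.exp (-lam * T) * ∫ s in Set.Ioi (0:ℝ), Real.exp (-lam * s) * g s := by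
  have hmp : MeasurePreserving (fun x : ℝ => x + T) volume volume :=
    measurePreserving_add_right volume T
  have hemb : MeasurableEmbedding (fun x : ℝ => x + T) := measurableEmbedding_addRight T
  have hpre : (fun x : ℝ => x + T) ⁻¹' (Set.Ioi T) = Set.Ioi 0 := by
    ext x; simp
  have := hmp.setIntegral_preimage_emb hemb
    (fun t => Real.exp (-lam * t) * g (t - T)) (Set.Ioi T)
  rw [hpre] at this
  rw [← this, ← integral_const_mul]
  congr 1 with x
  rw [add_sub_cancel_right, ← mul_assoc, ← Real.exp_add]
  ring_nf

/-- Concatenation property of absolute energy minimizers (Proposition AL1, second part). -/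
theorem concat_of_absolute_energy_minimizers {Y : Type*}
    (𝒰 : Y → Set (ℝ → Y)) (e : Y → ℝ)
    (hshift : ∀ y, ∀ u ∈ 𝒰 y, ∀ T : ℝ, 0 ≤ T → (fun t => u (t + T)) ∈ 𝒰 (u T))
    (hconcat : ∀ y, ∀ u ∈ 𝒰 y, ∀ T : ℝ, 0 ≤ T → ∀ v ∈ 𝒰 (u T),
      (fun t => if t ≤ T then u t else v (t - T)) ∈ 𝒰 y)
    (hmono : ∀ y, ∀ u ∈ 𝒰 y, AntitoneOn (fun t => e (u t)) (Set.Ici 0))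
    (hnonneg : ∀ y, ∀ u ∈ 𝒰 y, ∀ t, 0 ≤ t → 0 ≤ e (u t))
    (y : Y) (T : ℝ) (hT : 0 ≤ T)
    (u : ℝ → Y) (hu : u ∈ 𝒰 y)
    (huabs : ∀ w ∈ 𝒰 y, ∃ lam₀ > (0:ℝ), ∀ lam, lam₀ ≤ lam →
      (∫ t in Set.Ici (0:ℝ), Real.exp (-lam * t) * e (u t))
        ≤ ∫ t in Set.Ici (0:ℝ), Real.exp (-lam * t) * e (w t))
    (v : ℝ → Y) (hv : v ∈ 𝒰 (u T))
    (hvabs : ∀ w ∈ 𝒰 (u T), ∃ lam₀ > (0:ℝ), ∀ lam, lam₀ ≤ lam →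
      (∫ t in Set.Ici (0:ℝ), Real.exp (-lam * t) * e (v t))
        ≤ ∫ t in Set.Ici (0:ℝ), Real.exp (-lam * t) * e (w t)) :
    ∀ w ∈ 𝒰 y, ∃ lam₀ > (0:ℝ), ∀ lam, lam₀ ≤ lam →
      (∫ t in Set.Ici (0:ℝ),
          Real.exp (-lam * t) * e (if t ≤ T then u t else v (t - T)))
        ≤ ∫ t in Set.Ici (0:ℝ), Real.exp (-lam * t) * e (w t) := by
  intro w hw
  -- absolute minimality of v against the shifted u
  obtain ⟨lam₁, hlam₁, hv_le⟩ := hvabs (fun t => u (t + T)) (hshift y u hu T hT)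
  -- absolute minimality of u against w
  obtain ⟨lam₂, hlam₂, hu_le⟩ := huabs w hw
  refine ⟨max lam₁ lam₂, lt_max_of_lt_left hlam₁, fun lam hlam => ?_⟩
  have hl1 : lam₁ ≤ lam := le_trans (le_max_left _ _) hlam
  have hl2 : lam₂ ≤ lam := le_trans (le_max_right _ _) hlam
  have hlampos : (0:ℝ) < lam := lt_of_lt_of_le hlam₁ hl1
  -- it suffices to compare against u
  refine le_trans ?_ (hu_le lam hl2)
  -- integrability facts
  have hu_int : IntegrableOn (fun t => Real.exp (-lam * t) * e (u t)) (Set.Ici 0) :=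
    integrable_exp_mul_antitone (hmono y u hu) (hnonneg y u hu) hlampos
  have hvT_anti : AntitoneOn (fun t => e (v (t - T))) (Set.Ici T) := by
    intro s hs t ht hst
    exact hmono (u T) v hv (by simp [Set.mem_Ici] at hs ⊢; linarith)
      (by simp [Set.mem_Ici] at ht ⊢; linarith) (by linarith)
  have hvT_nn : ∀ t, T ≤ t → 0 ≤ e (v (t - T)) := fun t ht =>
    hnonneg (u T) v hv (t - T) (by linarith)
  have hvT_int : IntegrableOn (fun t => Real.exp (-lam * t) * e (v (t - T))) (Set.Ici T) :=
    integrable_exp_mul_antitone hvT_anti hvT_nn hlampos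
  -- split both integrals at T
  have hsplit : Set.Ici (0:ℝ) = Set.Icc 0 T ∪ Set.Ioi T := (Set.Icc_union_Ioi_eq_Ici hT).symm
  have hdisj : Disjoint (Set.Icc (0:ℝ) T) (Set.Ioi T) :=
    Set.disjoint_left.2 fun x hx hx' => absurd hx.2 (not_le.2 hx')
  -- the concatenated trajectory integrand
  set g : ℝ → ℝ := fun t => Real.exp (-lam * t) * e (if t ≤ T then u t else v (t - T)) with hg
  have hg_Icc : ∀ t ∈ Set.Icc (0:ℝ) T, g t = Real.exp (-lam * t) * e (u t) := by
    intro t ht; simp [hg, ht.2]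
  have hg_Ioi : ∀ t ∈ Set.Ioi T, g t = Real.exp (-lam * t) * e (v (t - T)) := by
    intro t ht; simp only [Set.mem_Ioi] at ht; simp [hg, not_le.2 ht]
  have hgint_Icc : IntegrableOn g (Set.Icc 0 T) := by
    refine (IntegrableOn.congr_fun (hu_int.mono_set Set.Icc_subset_Ici_self) ?_
      measurableSet_Icc)
    intro t ht; exact (hg_Icc t ht).symm
  have hgint_Ioi : IntegrableOn g (Set.Ioi T) := by
    refine (IntegrableOn.congr_fun (hvT_int.mono_set Set.Ioi_subset_Ici_self) ?_
      measurableSet_Ioi)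
    intro t ht; exact (hg_Ioi t ht).symm
  have hLHS : (∫ t in Set.Ici (0:ℝ), g t)
      = (∫ t in Set.Icc (0:ℝ) T, Real.exp (-lam * t) * e (u t))
        + ∫ t in Set.Ioi T, Real.exp (-lam * t) * e (v (t - T)) := by
    rw [hsplit, setIntegral_union hdisj measurableSet_Ioi hgint_Icc hgint_Ioi]
    congr 1
    · exact setIntegral_congr_fun measurableSet_Icc hg_Icc
    · exact setIntegral_congr_fun measurableSet_Ioi hg_Ioi
  have hRHS : (∫ t in Set.Ici (0:ℝ), Real.exp (-lam * t) * e (u t))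
      = (∫ t in Set.Icc (0:ℝ) T, Real.exp (-lam * t) * e (u t))
        + ∫ t in Set.Ioi T, Real.exp (-lam * t) * e (u t) := by
    rw [hsplit, setIntegral_union hdisj measurableSet_Ioi
      (hu_int.mono_set Set.Icc_subset_Ici_self)
      (hu_int.mono_set (Set.Ioi_subset_Ici_self.trans (Set.Ici_subset_Ici.2 hT)))]
  rw [hLHS, hRHS]
  refine add_le_add le_rfl ?_
  -- compare the tails via the shift formula
  have h1 : (∫ t in Set.Ioi T, Real.exp (-lam * t) * e (v (t - T)))
      = Real.exp (-lam * T) * ∫ s in Set.Ioi (0:ℝ), Real.exp (-lam * s) * e (v s) :=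
    shift_integral (fun s => e (v s)) T lam
  have h2 : (∫ t in Set.Ioi T, Real.exp (-lam * t) * e (u t))
      = Real.exp (-lam * T) * ∫ s in Set.Ioi (0:ℝ), Real.exp (-lam * s) * e (u (s + T)) := by
    have := shift_integral (fun s => e (u (s + T))) T lam
    simpa [sub_add_cancel] using this
  rw [h1, h2]
  refine mul_le_mul_of_nonneg_left ?_ (Real.exp_pos _).le
  rw [← integral_Ici_eq_integral_Ioi, ← integral_Ici_eq_integral_Ioi]
  exact hv_le lam hl1
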